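/- Let ω, s ∈ ℝ and set g = s². Suppose q, p, π, ξ : ℝ → ℝ are differentiable functions satisfying the Hamilton equations q'(t) = p(t), p'(t) = −ω² q(t) + s·π(t), ξ'(t) = −s·q(t) + π(t), π'(t) = ξ(t) for all t ∈ ℝ. Then q is four times differentiable and q⁗(t) + (ω² − 1) q''(t) + (g − ω²) q(t) = 0 for all t ∈ ℝ. -/
import Mathlib


/-- The Hamilton equations of the reduced Hamiltonian
h = p²/2 + (ω²/2)q² − √g·qπ + π²/2 − ξ²/2 (with g = s², canonical pairs (q,p) and (ξ,π))
imply the fourth-order Lagrange equation q⁗ + (ω²−1)q̈ + (g−ω²)q = 0. -/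
theorem stmt10 (ω s g : ℝ) (hg : g = s ^ 2)
    (q p P X : ℝ → ℝ)
    (hq : ∀ t : ℝ, HasDerivAt q (p t) t)
    (hp : ∀ t : ℝ, HasDerivAt p (-(ω ^ 2) * q t + s * P t) t)
    (hX : ∀ t : ℝ, HasDerivAt X (-s * q t + P t) t)
    (hP : ∀ t : ℝ, HasDerivAt P (X t) t) :
    ContDiff ℝ 4 q ∧
    ∀ t : ℝ, iteratedDeriv 4 q t + (ω ^ 2 - 1) * iteratedDeriv 2 q t
      + (g - ω ^ 2) * q t = 0 := by
  have h2 : ∀ t : ℝ, HasDerivAt (fun t => -(ω ^ 2) * q t + s * P t)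
      (-(ω ^ 2) * p t + s * X t) t := fun t =>
    ((hq t).const_mul _).add ((hP t).const_mul _)
  have h3 : ∀ t : ℝ, HasDerivAt (fun t => -(ω ^ 2) * p t + s * X t)
      (-(ω ^ 2) * (-(ω ^ 2) * q t + s * P t) + s * (-s * q t + P t)) t := fun t =>
    ((hp t).const_mul _).add ((hX t).const_mul _)
  have dq : deriv q = p := funext fun t => (hq t).deriv
  have dp : deriv p = fun t => -(ω ^ 2) * q t + s * P t := funext fun t => (hp t).deriv
  have d2 : deriv (fun t => -(ω ^ 2) * q t + s * P t)
      = fun t => -(ω ^ 2) * p t + s * X t := funext fun t => (h2 t).deriv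
  have d3 : deriv (fun t => -(ω ^ 2) * p t + s * X t)
      = fun t => -(ω ^ 2) * (-(ω ^ 2) * q t + s * P t) + s * (-s * q t + P t) :=
    funext fun t => (h3 t).deriv
  have cq : Continuous q := continuous_iff_continuousAt.mpr fun t => (hq t).continuousAt
  have cp : Continuous p := continuous_iff_continuousAt.mpr fun t => (hp t).continuousAt
  have cP : Continuous P := continuous_iff_continuousAt.mpr fun t => (hP t).continuousAt
  constructor
  · have step : ∀ (n : WithTop ℕ∞) (f f' : ℝ → ℝ), (∀ t, HasDerivAt f (f' t) t) →
        (n ≠ ⊤) → ContDiff ℝ n f' → ContDiff ℝ (n + 1) f := by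
      intro n f f' hf hn hf'
      rw [contDiff_succ_iff_deriv]
      refine ⟨fun t => (hf t).differentiableAt, ?_, ?_⟩
      · intro h; exact absurd h (by simpa using hn)
      · rw [funext fun t => (hf t).deriv]; exact hf'
    have e4 : (4 : WithTop ℕ∞) = 3 + 1 := by norm_num
    have e3 : (3 : WithTop ℕ∞) = 2 + 1 := by norm_num
    have e2 : (2 : WithTop ℕ∞) = 1 + 1 := by norm_num
    have e1 : (1 : WithTop ℕ∞) = 0 + 1 := by norm_num
    rw [e4]
    refine step 3 q p hq (by norm_num) ?_
    rw [e3]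
    refine step 2 p _ hp (by norm_num) ?_
    rw [e2]
    refine step 1 _ _ h2 (by norm_num) ?_
    rw [e1]
    refine step 0 _ _ h3 (by norm_num) ?_
    exact contDiff_zero.mpr <| ((continuous_const.mul ((continuous_const.mul cq).add
      (continuous_const.mul cP))).add (continuous_const.mul
      ((continuous_const.mul cq).add cP)))
  · intro t
    have e2 : iteratedDeriv 2 q = fun t => -(ω ^ 2) * q t + s * P t := by
      rw [show (2 : ℕ) = 0 + 1 + 1 from rfl]
      rw [iteratedDeriv_succ, iteratedDeriv_succ, iteratedDeriv_zero, dq, dp]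
    have e4 : iteratedDeriv 4 q
        = fun t => -(ω ^ 2) * (-(ω ^ 2) * q t + s * P t) + s * (-s * q t + P t) := by
      rw [show (4 : ℕ) = 2 + 1 + 1 from rfl]
      rw [iteratedDeriv_succ, iteratedDeriv_succ, e2, d2, d3]
    rw [e2, e4, hg]
    ring
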